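/- Let X : [0,T) × ℝ → ℝ² be a smooth family of closed curves evolving by the area-preserving mean-curvature flow, i.e. whose normal velocity satisfies ∂ₜX(t,u) · n(t,u) = −κ(t,u) + (1/L(t)) ∫₀¹ κ(t,w) |∂ᵤX(t,w)| dw for all (t,u), and assume A(0) > 0. Then the isoperimetric ratio t ↦ L(t)² / (4π A(t)) is non-increasing on [0,T). -/

import Mathlib

open Set MeasureTheory Real Filter
open scoped RealInnerProductSpace
open scoped Topology

noncomputable section

abbrev E2 : Type := EuclideanSpace ℝ (Fin 2)

def perp (p : E2) : E2 := (WithLp.equiv 2 (Fin 2 → ℝ)).symm ![p 1, -(p 0)]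

def unitNormal (Y : ℝ → E2) (u : ℝ) : E2 := ‖deriv Y u‖⁻¹ • perp (deriv Y u)

def curvature (Y : ℝ → E2) (u : ℝ) : ℝ :=
  -(‖deriv Y u‖⁻¹ * ⟪deriv (fun v => ‖deriv Y v‖⁻¹ • deriv Y v) u, unitNormal Y u⟫)

def curveLength (Y : ℝ → E2) : ℝ := ∫ u in (0:ℝ)..1, ‖deriv Y u‖

def enclosedArea (Y : ℝ → E2) : ℝ := (1/2) * ∫ u in (0:ℝ)..1, ⟪Y u, perp (deriv Y u)⟫

def IsSmoothClosedCurve (Y : ℝ → E2) : Prop :=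
  ContDiff ℝ 2 Y ∧ (∀ u, Y (u + 1) = Y u) ∧ ∀ u, deriv Y u ≠ 0

def IsSmoothClosedFamily (T : ℝ) (X : ℝ → ℝ → E2) : Prop :=
  ContDiffOn ℝ 2 (fun p : ℝ × ℝ => X p.1 p.2) (Ico 0 T ×ˢ univ) ∧
  ∀ t ∈ Ico 0 T, IsSmoothClosedCurve (X t)

lemma perp_apply0 (p : E2) : perp p 0 = p 1 := rfl
lemma perp_apply1 (p : E2) : perp p 1 = -(p 0) := rfl
lemma inner_E2 (a b : E2) : ⟪a, b⟫ = a 0 * b 0 + a 1 * b 1 := by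
  simp [PiLp.inner_apply, Fin.sum_univ_two, mul_comm]

lemma perp_ext {p q : E2} (h0 : p 0 = q 0) (h1 : p 1 = q 1) : p = q := by
  ext i; fin_cases i <;> assumption

lemma perp_add (p q : E2) : perp (p + q) = perp p + perp q := by
  apply perp_ext <;> simp [perp_apply0, perp_apply1] <;> ring

lemma perp_smul (c : ℝ) (p : E2) : perp (c • p) = c • perp p := by
  apply perp_ext <;> simp [perp_apply0, perp_apply1] <;> ring

def perpL : E2 →L[ℝ] E2 :=
  LinearMap.toContinuousLinearMap
    { toFun := perp, map_add' := perp_add, map_smul' := perp_smul }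

lemma perpL_apply (p : E2) : perpL p = perp p := rfl

lemma inner_perp_swap (a b : E2) : ⟪perp a, b⟫ = -⟪a, perp b⟫ := by
  simp only [inner_E2, perp_apply0, perp_apply1]; ring

lemma inner_perp_self (a : E2) : ⟪a, perp a⟫ = 0 := by
  simp only [inner_E2, perp_apply0, perp_apply1]; ring

lemma inner_perp_perp (a b : E2) : ⟪perp a, perp b⟫ = ⟪a, b⟫ := by
  simp only [inner_E2, perp_apply0, perp_apply1]; ring

lemma norm_perp (a : E2) : ‖perp a‖ = ‖a‖ := by
  have h := inner_perp_perp a a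
  rw [real_inner_self_eq_norm_sq, real_inner_self_eq_norm_sq] at h
  nlinarith [norm_nonneg (perp a), norm_nonneg a]

/-- decomposition: if `‖T‖ = 1` and `⟪p, T⟫ = 0` then `p = ⟪p, perp T⟫ • perp T`. -/
lemma decomp_perp {Tv p : E2} (hT : ‖Tv‖ = 1) (h : ⟪p, Tv⟫ = 0) :
    p = ⟪p, perp Tv⟫ • perp Tv := by
  have hT2 : Tv 0 * Tv 0 + Tv 1 * Tv 1 = 1 := by
    have := real_inner_self_eq_norm_sq Tv
    rw [hT] at this; rw [inner_E2] at this; nlinarith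
  rw [inner_E2] at h
  apply perp_ext <;>
    simp only [PiLp.smul_apply, smul_eq_mul, inner_E2, perp_apply0, perp_apply1]
  · linear_combination (-(p 0)) * hT2 + Tv 0 * h
  · linear_combination (-(p 1)) * hT2 + Tv 1 * h

/-- derivative of the norm of a nonvanishing differentiable curve -/
lemma hasDerivAt_norm_curve {y : ℝ → E2} {y' : E2} {x : ℝ}
    (h : HasDerivAt y y' x) (h0 : y x ≠ 0) :
    HasDerivAt (fun s => ‖y s‖) (⟪y', y x⟫ / ‖y x‖) x := by
  have hq : HasDerivAt (fun s => ⟪y s, y s⟫) (⟪y x, y'⟫ + ⟪y', y x⟫) x := h.inner ℝ h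
  have hqx : ⟪y x, y x⟫ ≠ 0 := by
    rw [real_inner_self_eq_norm_sq]
    exact pow_ne_zero _ (norm_ne_zero_iff.mpr h0)
  have hs := (Real.hasDerivAt_sqrt hqx).comp x hq
  have hnorm : (fun s => ‖y s‖) = fun s => Real.sqrt ⟪y s, y s⟫ := by
    funext s; rw [real_inner_self_eq_norm_sq, Real.sqrt_sq (norm_nonneg _)]
  rw [hnorm]
  refine hs.congr_deriv (Eq.symm ?_)
  rw [real_inner_self_eq_norm_sq, Real.sqrt_sq (norm_nonneg _), real_inner_comm (y x) y']
  have : ‖y x‖ ≠ 0 := norm_ne_zero_iff.mpr h0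
  field_simp
  ring

section Curve
variable {Y : ℝ → E2}

lemma contDiff_deriv_curve (hY : ContDiff ℝ 2 Y) : ContDiff ℝ 1 (deriv Y) := by
  have h1 : ContDiff ℝ 1 (fderiv ℝ Y) := hY.fderiv_right (by norm_num)
  have : (deriv Y) = fun u => fderiv ℝ Y u 1 := by
    funext u; rfl
  rw [this]
  exact h1.clm_apply contDiff_const

lemma continuous_deriv_of_contDiff_one {g : ℝ → E2} (hg : ContDiff ℝ 1 g) :
    Continuous (deriv g) := by
  have h1 : ContDiff ℝ 0 (fderiv ℝ g) := hg.fderiv_right (by norm_num)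
  have : (deriv g) = fun u => fderiv ℝ g u 1 := by funext u; rfl
  rw [this]
  exact (contDiff_zero.mp (h1.clm_apply contDiff_const))

/-- the explicit derivative of the unit tangent -/
def curveG (Y : ℝ → E2) (u : ℝ) : E2 :=
  ‖deriv Y u‖⁻¹ • deriv (deriv Y) u +
    (-(⟪deriv (deriv Y) u, deriv Y u⟫ / ‖deriv Y u‖) / ‖deriv Y u‖ ^ 2) • deriv Y u

lemma hasDerivAt_tangent (hY : ContDiff ℝ 2 Y) (hd0 : ∀ u, deriv Y u ≠ 0) (u : ℝ) :
    HasDerivAt (fun v => ‖deriv Y v‖⁻¹ • deriv Y v) (curveG Y u) u := by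
  have hd1 : ContDiff ℝ 1 (deriv Y) := contDiff_deriv_curve hY
  have hdd : HasDerivAt (deriv Y) (deriv (deriv Y) u) u :=
    ((hd1.differentiable (by norm_num)) u).hasDerivAt
  have hρ : HasDerivAt (fun v => ‖deriv Y v‖) (⟪deriv (deriv Y) u, deriv Y u⟫ / ‖deriv Y u‖) u :=
    hasDerivAt_norm_curve hdd (hd0 u)
  have hρi := hρ.inv (norm_ne_zero_iff.mpr (hd0 u))
  have := hρi.smul hdd
  exact this

lemma continuous_curveG (hY : ContDiff ℝ 2 Y) (hd0 : ∀ u, deriv Y u ≠ 0) :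
    Continuous (curveG Y) := by
  have hd1 : ContDiff ℝ 1 (deriv Y) := contDiff_deriv_curve hY
  have hc : Continuous (deriv Y) := hd1.continuous
  have hcc : Continuous (deriv (deriv Y)) := continuous_deriv_of_contDiff_one hd1
  have hn : Continuous fun u => ‖deriv Y u‖ := hc.norm
  have hni : Continuous fun u => ‖deriv Y u‖⁻¹ :=
    hn.inv₀ (fun u => norm_ne_zero_iff.mpr (hd0 u))
  have hne : ∀ u, ‖deriv Y u‖ ≠ 0 := fun u => norm_ne_zero_iff.mpr (hd0 u)
  have hinner : Continuous fun u => ⟪deriv (deriv Y) u, deriv Y u⟫ := hcc.inner hc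
  exact (hni.smul hcc).add
    ((((hinner.div hn hne).neg).div (hn.pow 2) (fun u => pow_ne_zero _ (hne u))).smul hc)

lemma deriv_tangent_eq (hY : ContDiff ℝ 2 Y) (hd0 : ∀ u, deriv Y u ≠ 0) (u : ℝ) :
    deriv (fun v => ‖deriv Y v‖⁻¹ • deriv Y v) u = curveG Y u :=
  (hasDerivAt_tangent hY hd0 u).deriv

lemma curvature_eq_G (hY : ContDiff ℝ 2 Y) (hd0 : ∀ u, deriv Y u ≠ 0) (u : ℝ) :
    curvature Y u = -(‖deriv Y u‖⁻¹ * ⟪curveG Y u, unitNormal Y u⟫) := by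
  rw [curvature, deriv_tangent_eq hY hd0]

lemma unitNormal_eq_perp_tangent (u : ℝ) :
    unitNormal Y u = perp (‖deriv Y u‖⁻¹ • deriv Y u) := by
  rw [unitNormal, perp_smul]

lemma norm_tangent (hd0 : ∀ u, deriv Y u ≠ 0) (u : ℝ) :
    ‖(‖deriv Y u‖⁻¹ • deriv Y u : E2)‖ = 1 := by
  rw [norm_smul, norm_inv, norm_norm]
  exact inv_mul_cancel₀ (norm_ne_zero_iff.mpr (hd0 u))

lemma inner_G_tangent_zero (hY : ContDiff ℝ 2 Y) (hd0 : ∀ u, deriv Y u ≠ 0) (u : ℝ) :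
    ⟪curveG Y u, ‖deriv Y u‖⁻¹ • deriv Y u⟫ = 0 := by
  set Tn : ℝ → E2 := fun v => ‖deriv Y v‖⁻¹ • deriv Y v with hTn
  have hq : ∀ v, ⟪Tn v, Tn v⟫ = 1 := by
    intro v
    rw [real_inner_self_eq_norm_sq, norm_tangent hd0 v, one_pow]
  have h1 : HasDerivAt (fun v => ⟪Tn v, Tn v⟫) (⟪Tn u, curveG Y u⟫ + ⟪curveG Y u, Tn u⟫) u :=
    (hasDerivAt_tangent hY hd0 u).inner ℝ (hasDerivAt_tangent hY hd0 u)
  have h2 : HasDerivAt (fun v => ⟪Tn v, Tn v⟫) 0 u := by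
    have : (fun v => ⟪Tn v, Tn v⟫) = fun _ => (1:ℝ) := funext hq
    rw [this]; exact hasDerivAt_const u 1
  have h3 := h1.unique h2
  rw [real_inner_comm (Tn u)] at h3
  rw [real_inner_comm]
  linarith [h3]

lemma curveG_eq (hY : ContDiff ℝ 2 Y) (hd0 : ∀ u, deriv Y u ≠ 0) (u : ℝ) :
    curveG Y u = (-(curvature Y u) * ‖deriv Y u‖) • unitNormal Y u := by
  have hdec := decomp_perp (norm_tangent hd0 u) (inner_G_tangent_zero hY hd0 u)
  rw [← unitNormal_eq_perp_tangent] at hdec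
  rw [curvature_eq_G hY hd0, neg_neg]
  have hn : ‖deriv Y u‖ ≠ 0 := norm_ne_zero_iff.mpr (hd0 u)
  have h2 : ‖deriv Y u‖⁻¹ * ⟪curveG Y u, unitNormal Y u⟫ * ‖deriv Y u‖ =
      ⟪curveG Y u, unitNormal Y u⟫ := by field_simp
  rw [h2]
  exact hdec

end Curve

section Family

def fam (X : ℝ → ℝ → E2) : ℝ × ℝ → E2 := fun p => X p.1 p.2
def famD (X : ℝ → ℝ → E2) (p : ℝ × ℝ) : (ℝ × ℝ) →L[ℝ] E2 := fderiv ℝ (fam X) p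
def famD2 (X : ℝ → ℝ → E2) (p : ℝ × ℝ) : (ℝ × ℝ) →L[ℝ] (ℝ × ℝ) →L[ℝ] E2 :=
  fderiv ℝ (famD X) p

variable {T : ℝ} {X : ℝ → ℝ → E2}

lemma omega_open : IsOpen (Ioo (0:ℝ) T ×ˢ (univ : Set ℝ)) := isOpen_Ioo.prod isOpen_univ

lemma omega_sub : (Ioo (0:ℝ) T ×ˢ (univ : Set ℝ)) ⊆ (Ico 0 T ×ˢ univ) :=
  prod_mono_left Ioo_subset_Ico_self

lemma mem_omega {t u : ℝ} (ht : t ∈ Ioo 0 T) : (t, u) ∈ Ioo (0:ℝ) T ×ˢ (univ : Set ℝ) :=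
  mk_mem_prod ht trivial

variable (hC : ContDiffOn ℝ 2 (fam X) (Ico 0 T ×ˢ univ))
include hC

lemma fam_hasFDerivAt {t u : ℝ} (ht : t ∈ Ioo 0 T) :
    HasFDerivAt (fam X) (famD X (t, u)) (t, u) := by
  have h := (hC.mono omega_sub).contDiffAt (omega_open.mem_nhds (mem_omega (u := u) ht))
  exact (h.differentiableAt (by norm_num)).hasFDerivAt

lemma hasDerivAt_time {t u : ℝ} (ht : t ∈ Ioo 0 T) :
    HasDerivAt (fun s => X s u) (famD X (t, u) ((1:ℝ), (0:ℝ))) t := by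
  have hι : HasDerivAt (fun s : ℝ => (s, u)) ((1:ℝ), (0:ℝ)) t :=
    (hasDerivAt_id t).prodMk (hasDerivAt_const t u)
  have h := (fam_hasFDerivAt hC (u := u) ht).comp_hasDerivAt t hι
  exact h

lemma hasDerivAt_space {t u : ℝ} (ht : t ∈ Ioo 0 T) :
    HasDerivAt (X t) (famD X (t, u) ((0:ℝ), (1:ℝ))) u := by
  have hι : HasDerivAt (fun v : ℝ => (t, v)) ((0:ℝ), (1:ℝ)) u :=
    (hasDerivAt_const u t).prodMk (hasDerivAt_id u)
  have h := (fam_hasFDerivAt hC (u := u) ht).comp_hasDerivAt u hι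
  exact h

lemma deriv_space_eq {t u : ℝ} (ht : t ∈ Ioo 0 T) :
    deriv (X t) u = famD X (t, u) ((0:ℝ), (1:ℝ)) := (hasDerivAt_space hC ht).deriv

lemma famD_contDiffOn : ContDiffOn ℝ 1 (famD X) (Ioo (0:ℝ) T ×ˢ (univ : Set ℝ)) :=
  (hC.mono omega_sub).fderiv_of_isOpen omega_open (by norm_num)

lemma famD_hasFDerivAt {t u : ℝ} (ht : t ∈ Ioo 0 T) :
    HasFDerivAt (famD X) (famD2 X (t, u)) (t, u) := by
  have h := (famD_contDiffOn hC).contDiffAt (omega_open.mem_nhds (mem_omega (u := u) ht))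
  exact (h.differentiableAt (by norm_num)).hasFDerivAt

lemma famD2_symm {t u : ℝ} (ht : t ∈ Ioo 0 T) (v w : ℝ × ℝ) :
    famD2 X (t, u) v w = famD2 X (t, u) w v := by
  have hf : ∀ᶠ y in 𝓝 ((t:ℝ), u), HasFDerivAt (fam X) (famD X y) y := by
    filter_upwards [omega_open.mem_nhds (mem_omega (u := u) ht)] with p hp
    have h := ((hC.mono omega_sub).contDiffAt (omega_open.mem_nhds hp)).differentiableAt
      (by norm_num)
    exact h.hasFDerivAt
  exact second_derivative_symmetric_of_eventually hf (famD_hasFDerivAt hC ht) v w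

lemma hasDerivAt_Dspace_time {t u : ℝ} (ht : t ∈ Ioo 0 T) :
    HasDerivAt (fun s => famD X (s, u) ((0:ℝ), (1:ℝ)))
      (famD2 X (t, u) ((1:ℝ), (0:ℝ)) ((0:ℝ), (1:ℝ))) t := by
  have hι : HasDerivAt (fun s : ℝ => (s, u)) ((1:ℝ), (0:ℝ)) t :=
    (hasDerivAt_id t).prodMk (hasDerivAt_const t u)
  have h1 := (famD_hasFDerivAt hC (u := u) ht).comp_hasDerivAt t hι
  have h2 := h1.clm_apply (hasDerivAt_const t ((0:ℝ), (1:ℝ)))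
  simpa using h2

lemma hasDerivAt_Dtime_space {t u : ℝ} (ht : t ∈ Ioo 0 T) :
    HasDerivAt (fun v => famD X (t, v) ((1:ℝ), (0:ℝ)))
      (famD2 X (t, u) ((1:ℝ), (0:ℝ)) ((0:ℝ), (1:ℝ))) u := by
  have hι : HasDerivAt (fun v : ℝ => (t, v)) ((0:ℝ), (1:ℝ)) u :=
    (hasDerivAt_const u t).prodMk (hasDerivAt_id u)
  have h1 := (famD_hasFDerivAt hC (u := u) ht).comp_hasDerivAt u hι
  have h2 := h1.clm_apply (hasDerivAt_const u ((1:ℝ), (0:ℝ)))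
  rw [famD2_symm hC ht]
  simpa using h2

lemma continuousOn_famD2_apply (v w : ℝ × ℝ) :
    ContinuousOn (fun p => famD2 X p v w) (Ioo (0:ℝ) T ×ˢ (univ : Set ℝ)) := by
  have h : ContinuousOn (famD2 X) (Ioo (0:ℝ) T ×ˢ (univ : Set ℝ)) := by
    have h0 : ContDiffOn ℝ 0 (fun p => fderiv ℝ (famD X) p) (Ioo (0:ℝ) T ×ˢ (univ : Set ℝ)) :=
      (famD_contDiffOn hC).fderiv_of_isOpen omega_open (by norm_num)
    exact contDiffOn_zero.mp h0
  exact ((h.clm_apply continuousOn_const).clm_apply continuousOn_const)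

lemma continuousOn_famD_apply (v : ℝ × ℝ) :
    ContinuousOn (fun p => famD X p v) (Ioo (0:ℝ) T ×ˢ (univ : Set ℝ)) :=
  ((famD_contDiffOn hC).continuousOn.clm_apply continuousOn_const)

lemma famD_periodic (hper : ∀ t ∈ Ico (0:ℝ) T, ∀ u, X t (u + 1) = X t u)
    {t u : ℝ} (ht : t ∈ Ioo 0 T) :
    famD X (t, u + 1) = famD X (t, u) := by
  have hσ : HasFDerivAt (fun p : ℝ × ℝ => (p.1, p.2 + 1)) (ContinuousLinearMap.id ℝ (ℝ × ℝ))
      (t, u) := by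
    have heq : (fun p : ℝ × ℝ => (p.1, p.2 + 1)) = fun p : ℝ × ℝ => p + ((0:ℝ), (1:ℝ)) := by
      funext p
      simp [Prod.ext_iff]
    rw [heq]
    simpa using (hasFDerivAt_id ((t:ℝ), u)).add_const ((0:ℝ), (1:ℝ))
  have hcomp : HasFDerivAt (fun p : ℝ × ℝ => fam X (p.1, p.2 + 1)) (famD X (t, u + 1)) (t, u) := by
    have h := (fam_hasFDerivAt hC (u := u + 1) ht).comp (t, u) hσ
    simp only [ContinuousLinearMap.comp_id] at h
    exact h
  have heq : (fun p : ℝ × ℝ => fam X (p.1, p.2 + 1)) =ᶠ[𝓝 (t, u)] fam X := by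
    filter_upwards [omega_open.mem_nhds (mem_omega ht)] with p hp
    exact hper p.1 (Ioo_subset_Ico_self hp.1) p.2
  have h2 : HasFDerivAt (fam X) (famD X (t, u + 1)) (t, u) :=
    hcomp.congr_of_eventuallyEq heq.symm
  exact h2.fderiv.symm.trans (fam_hasFDerivAt hC ht).fderiv

end Family

section Helpers

/-- integral of the derivative of a periodic function vanishes -/
lemma integral_periodic_deriv_zero {φ φ' : ℝ → ℝ} (h : ∀ u, HasDerivAt φ (φ' u) u)
    (hc : Continuous φ') (hper : φ 1 = φ 0) : ∫ u in (0:ℝ)..1, φ' u = 0 := by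
  rw [intervalIntegral.integral_eq_sub_of_hasDerivAt (fun x _ => h x)
    (hc.intervalIntegrable 0 1), hper, sub_self]

/-- weighted Cauchy–Schwarz style inequality -/
lemma key_CS {k r : ℝ → ℝ} (hk : Continuous k) (hr : Continuous r)
    (hr0 : ∀ u, 0 ≤ r u) (c : ℝ)
    (hc : c * ∫ u in (0:ℝ)..1, r u = ∫ u in (0:ℝ)..1, k u * r u) :
    0 ≤ ∫ u in (0:ℝ)..1, k u * r u * (k u - c) := by
  have hint : ∀ (g : ℝ → ℝ), Continuous g → IntervalIntegrable g volume 0 1 :=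
    fun g hg => hg.intervalIntegrable 0 1
  have h0 : ∫ u in (0:ℝ)..1, (k u - c) * r u = 0 := by
    have he : (fun u => (k u - c) * r u) = fun u => k u * r u - c * r u := by
      funext u; ring
    rw [he, intervalIntegral.integral_sub (hint (fun u => k u * r u) (hk.mul hr))
      (hint (fun u => c * r u) (continuous_const.mul hr)), intervalIntegral.integral_const_mul, ← hc, sub_self]
  have h1 : ∫ u in (0:ℝ)..1, k u * r u * (k u - c) =
      (∫ u in (0:ℝ)..1, (k u - c)^2 * r u) + c * ∫ u in (0:ℝ)..1, (k u - c) * r u := by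
    rw [← intervalIntegral.integral_const_mul,
      ← intervalIntegral.integral_add (hint (fun u => (k u - c)^2 * r u) (((hk.sub continuous_const).pow 2).mul hr))
        (hint (fun u => c * ((k u - c) * r u)) (continuous_const.mul ((hk.sub continuous_const).mul hr)))]
    congr 1; funext u; ring
  rw [h1, h0, mul_zero, add_zero]
  exact intervalIntegral.integral_nonneg (by norm_num)
    (fun u _ => mul_nonneg (sq_nonneg _) (hr0 u))

end Helpers

section FamilyW

variable {T : ℝ} {X : ℝ → ℝ → E2}

/-- the within-derivative of the family, valid up to the boundary `t = 0` -/
def famDW (T : ℝ) (X : ℝ → ℝ → E2) (p : ℝ × ℝ) : (ℝ × ℝ) →L[ℝ] E2 :=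
  fderivWithin ℝ (fam X) (Ico 0 T ×ˢ univ) p

lemma uniqueDiffOn_S : UniqueDiffOn ℝ (Ico (0:ℝ) T ×ˢ (univ : Set ℝ)) :=
  (uniqueDiffOn_Ico 0 T).prod uniqueDiffOn_univ

variable (hC : ContDiffOn ℝ 2 (fam X) (Ico 0 T ×ˢ univ))
include hC

lemma continuousOn_famDW : ContinuousOn (famDW T X) (Ico 0 T ×ˢ univ) :=
  hC.continuousOn_fderivWithin uniqueDiffOn_S (by norm_num)

lemma deriv_space_eq_W {t : ℝ} (ht : t ∈ Ico 0 T) (u : ℝ) :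
    deriv (X t) u = famDW T X (t, u) ((0:ℝ), (1:ℝ)) := by
  have hdw : HasFDerivWithinAt (fam X) (famDW T X (t, u)) (Ico 0 T ×ˢ univ) (t, u) :=
    (hC.differentiableOn (by norm_num) _ (mk_mem_prod ht trivial)).hasFDerivWithinAt
  have hι : HasDerivWithinAt (fun v : ℝ => (t, v)) ((0:ℝ), (1:ℝ)) univ u :=
    ((hasDerivAt_const u t).prodMk (hasDerivAt_id u)).hasDerivWithinAt
  have h := hdw.comp_hasDerivWithinAt u hι (fun v _ => mk_mem_prod ht trivial)
  rw [hasDerivWithinAt_univ] at h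
  rw [show X t = fam X ∘ Prod.mk t from rfl]
  exact h.deriv

lemma continuousOn_length (hcurve : ∀ t ∈ Ico (0:ℝ) T, IsSmoothClosedCurve (X t)) :
    ContinuousOn (fun t => ∫ u in (0:ℝ)..1, ‖deriv (X t) u‖) (Ico 0 T) := by
  intro t₀ ht₀
  set b := (t₀ + T)/2 with hbdef
  have hb1 : t₀ < b := by simp only [hbdef]; linarith [ht₀.2]
  have hb2 : b < T := by simp only [hbdef]; linarith [ht₀.2]
  have hIoc : Set.uIoc (0:ℝ) 1 = Ioc 0 1 := uIoc_of_le (by norm_num)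
  have hKS : (Icc 0 b ×ˢ Icc (0:ℝ) 1 : Set (ℝ × ℝ)) ⊆ Ico 0 T ×ˢ univ := by
    intro p hp
    exact mk_mem_prod ⟨hp.1.1, lt_of_le_of_lt hp.1.2 hb2⟩ trivial
  have hg : ContinuousOn (fun p => ‖famDW T X p ((0:ℝ), (1:ℝ))‖) (Ico 0 T ×ˢ univ) :=
    ((continuousOn_famDW hC).clm_apply continuousOn_const).norm
  obtain ⟨M, hM⟩ := (isCompact_Icc.prod isCompact_Icc).exists_bound_of_continuousOn
    (hg.mono hKS)
  apply intervalIntegral.continuousWithinAt_of_dominated_interval (bound := fun _ => M)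
  · filter_upwards [eventually_mem_nhdsWithin] with t ht
    exact ((contDiff_deriv_curve (hcurve t ht).1).continuous.norm).aestronglyMeasurable
  · have hev : ∀ᶠ t in 𝓝[Ico 0 T] t₀, t ∈ Ico 0 T ∧ t ≤ b :=
      eventually_mem_nhdsWithin.and
        (eventually_nhdsWithin_of_eventually_nhds (eventually_le_nhds hb1))
    filter_upwards [hev] with t ht
    refine ae_of_all _ (fun u hu => ?_)
    rw [hIoc] at hu
    have hKmem : (t, u) ∈ (Icc 0 b ×ˢ Icc (0:ℝ) 1 : Set (ℝ × ℝ)) :=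
      mk_mem_prod ⟨ht.1.1, ht.2⟩ ⟨le_of_lt hu.1, hu.2⟩
    have := hM _ hKmem
    rw [deriv_space_eq_W hC ht.1]
    simpa using this
  · exact intervalIntegrable_const
  · refine ae_of_all _ (fun u _ => ?_)
    have hmap : ∀ t ∈ Ico (0:ℝ) T, ((t : ℝ), u) ∈ (Ico 0 T ×ˢ univ : Set (ℝ × ℝ)) :=
      fun t ht => mk_mem_prod ht trivial
    have hcont : ContinuousOn (fun t => ‖famDW T X (t, u) ((0:ℝ), (1:ℝ))‖) (Ico 0 T) :=
      hg.comp (Continuous.continuousOn (by continuity)) hmap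
    exact ((hcont t₀ ht₀).congr (fun t ht => by rw [deriv_space_eq_W hC ht])
      (by rw [deriv_space_eq_W hC ht₀]))

lemma continuousOn_area_int (hcurve : ∀ t ∈ Ico (0:ℝ) T, IsSmoothClosedCurve (X t)) :
    ContinuousOn (fun t => ∫ u in (0:ℝ)..1, ⟪X t u, perp (deriv (X t) u)⟫) (Ico 0 T) := by
  intro t₀ ht₀
  set b := (t₀ + T)/2 with hbdef
  have hb1 : t₀ < b := by simp only [hbdef]; linarith [ht₀.2]
  have hb2 : b < T := by simp only [hbdef]; linarith [ht₀.2]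
  have hIoc : Set.uIoc (0:ℝ) 1 = Ioc 0 1 := uIoc_of_le (by norm_num)
  have hKS : (Icc 0 b ×ˢ Icc (0:ℝ) 1 : Set (ℝ × ℝ)) ⊆ Ico 0 T ×ˢ univ := by
    intro p hp
    exact mk_mem_prod ⟨hp.1.1, lt_of_le_of_lt hp.1.2 hb2⟩ trivial
  have hg : ContinuousOn (fun p => ⟪fam X p, perpL (famDW T X p ((0:ℝ), (1:ℝ)))⟫)
      (Ico 0 T ×ˢ univ) :=
    (hC.continuousOn.inner
      (perpL.continuous.comp_continuousOn ((continuousOn_famDW hC).clm_apply continuousOn_const)))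
  obtain ⟨M, hM⟩ := (isCompact_Icc.prod isCompact_Icc).exists_bound_of_continuousOn
    (hg.mono hKS)
  apply intervalIntegral.continuousWithinAt_of_dominated_interval (bound := fun _ => M)
  · filter_upwards [eventually_mem_nhdsWithin] with t ht
    have hc1 : Continuous (X t) := (hcurve t ht).1.continuous
    have hc2 : Continuous fun u => perp (deriv (X t) u) :=
      perpL.continuous.comp (contDiff_deriv_curve (hcurve t ht).1).continuous
    exact (hc1.inner hc2).aestronglyMeasurable
  · have hev : ∀ᶠ t in 𝓝[Ico 0 T] t₀, t ∈ Ico 0 T ∧ t ≤ b :=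
      eventually_mem_nhdsWithin.and
        (eventually_nhdsWithin_of_eventually_nhds (eventually_le_nhds hb1))
    filter_upwards [hev] with t ht
    refine ae_of_all _ (fun u hu => ?_)
    rw [hIoc] at hu
    have hKmem : (t, u) ∈ (Icc 0 b ×ˢ Icc (0:ℝ) 1 : Set (ℝ × ℝ)) :=
      mk_mem_prod ⟨ht.1.1, ht.2⟩ ⟨le_of_lt hu.1, hu.2⟩
    have := hM _ hKmem
    rw [deriv_space_eq_W hC ht.1]
    simpa [fam, perpL_apply] using this
  · exact intervalIntegrable_const
  · refine ae_of_all _ (fun u _ => ?_)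
    have hmap : ∀ t ∈ Ico (0:ℝ) T, ((t : ℝ), u) ∈ (Ico 0 T ×ˢ univ : Set (ℝ × ℝ)) :=
      fun t ht => mk_mem_prod ht trivial
    have hcont : ContinuousOn
        (fun t => ⟪fam X (t, u), perpL (famDW T X (t, u) ((0:ℝ), (1:ℝ)))⟫) (Ico 0 T) :=
      hg.comp (Continuous.continuousOn (by continuity)) hmap
    exact ((hcont t₀ ht₀).congr (fun t ht => by rw [deriv_space_eq_W hC ht]; rfl)
      (by rw [deriv_space_eq_W hC ht₀]; rfl))

end FamilyW


section FamilyDeriv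

variable {T : ℝ} {X : ℝ → ℝ → E2}
variable (hC : ContDiffOn ℝ 2 (fam X) (Ico 0 T ×ˢ univ))
variable (hcurve : ∀ t ∈ Ico (0:ℝ) T, IsSmoothClosedCurve (X t))
include hC hcurve

lemma famD_space_ne_zero {t u : ℝ} (ht : t ∈ Ioo 0 T) :
    famD X (t, u) ((0:ℝ), (1:ℝ)) ≠ 0 := by
  rw [← deriv_space_eq hC ht]
  exact (hcurve t (Ioo_subset_Ico_self ht)).2.2 u

lemma hasDerivAt_length {t₀ : ℝ} (ht₀ : t₀ ∈ Ioo 0 T) :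
    HasDerivAt (fun t => ∫ u in (0:ℝ)..1, ‖deriv (X t) u‖)
      (∫ u in (0:ℝ)..1, ⟪famD2 X (t₀, u) ((1:ℝ), (0:ℝ)) ((0:ℝ), (1:ℝ)),
        famD X (t₀, u) ((0:ℝ), (1:ℝ))⟫ / ‖famD X (t₀, u) ((0:ℝ), (1:ℝ))‖) t₀ := by
  set G' : ℝ × ℝ → ℝ := fun p =>
    ⟪famD2 X p ((1:ℝ), (0:ℝ)) ((0:ℝ), (1:ℝ)), famD X p ((0:ℝ), (1:ℝ))⟫ /
      ‖famD X p ((0:ℝ), (1:ℝ))‖ with hG'def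
  set ε := min t₀ (T - t₀) / 2 with hεdef
  have hε1 : ε ≤ t₀ / 2 := by
    simp only [hεdef]; have := min_le_left t₀ (T - t₀); linarith
  have hε2 : ε ≤ (T - t₀) / 2 := by
    simp only [hεdef]; have := min_le_right t₀ (T - t₀); linarith
  have hε : 0 < ε := by
    simp only [hεdef]
    rcases min_cases t₀ (T - t₀) with ⟨h, _⟩ | ⟨h, _⟩ <;> rw [h] <;>
      [linarith [ht₀.1]; linarith [ht₀.2]]
  have hballIoo : ∀ t ∈ Metric.ball t₀ ε, t ∈ Ioo (0:ℝ) T := by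
    intro t ht
    rw [Metric.mem_ball, Real.dist_eq, abs_sub_lt_iff] at ht
    exact ⟨by linarith [ht₀.1, ht.1, ht.2], by linarith [ht₀.2, ht.1, ht.2]⟩
  have hKΩ : (Icc (t₀ - ε) (t₀ + ε) ×ˢ Icc (0:ℝ) 1 : Set (ℝ × ℝ)) ⊆
      Ioo (0:ℝ) T ×ˢ univ := by
    intro p hp
    refine mk_mem_prod ⟨?_, ?_⟩ trivial
    · have := hp.1.1; linarith [ht₀.1]
    · have := hp.1.2; linarith [ht₀.2]
  have hG'cont : ContinuousOn G' (Ioo (0:ℝ) T ×ˢ univ) := by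
    apply ContinuousOn.div
    · exact (continuousOn_famD2_apply hC _ _).inner (continuousOn_famD_apply hC _)
    · exact (continuousOn_famD_apply hC _).norm
    · rintro ⟨t, u⟩ hp
      exact norm_ne_zero_iff.mpr (famD_space_ne_zero hC hcurve hp.1)
  obtain ⟨M, hM⟩ := ((isCompact_Icc.prod isCompact_Icc).exists_bound_of_continuousOn
    (hG'cont.mono hKΩ))
  have hIoc : Set.uIoc (0:ℝ) 1 = Ioc 0 1 := uIoc_of_le (by norm_num)
  refine (intervalIntegral.hasDerivAt_integral_of_dominated_loc_of_deriv_le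
    (F := fun t u => ‖deriv (X t) u‖) (F' := fun t u => G' (t, u))
    (bound := fun _ => M) (Metric.ball_mem_nhds t₀ hε) ?_ ?_ ?_ ?_ ?_ ?_).2
  · filter_upwards [isOpen_Ioo.mem_nhds ht₀] with t ht
    exact ((contDiff_deriv_curve
      (hcurve t (Ioo_subset_Ico_self ht)).1).continuous.norm).aestronglyMeasurable
  · exact ((contDiff_deriv_curve
      (hcurve t₀ (Ioo_subset_Ico_self ht₀)).1).continuous.norm).intervalIntegrable 0 1
  · have hcc : Continuous fun u => G' (t₀, u) :=
      hG'cont.comp_continuous (continuous_const.prodMk continuous_id)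
        (fun u => mem_omega ht₀)
    exact hcc.aestronglyMeasurable
  · refine ae_of_all _ (fun u hu t ht => ?_)
    rw [hIoc] at hu
    rw [Metric.mem_ball, Real.dist_eq, abs_sub_lt_iff] at ht
    exact hM (t, u) (mk_mem_prod ⟨by linarith [ht.2], by linarith [ht.1]⟩
      ⟨le_of_lt hu.1, hu.2⟩)
  · exact intervalIntegrable_const
  · refine ae_of_all _ (fun u hu t ht => ?_)
    have htIoo := hballIoo t ht
    have hy := hasDerivAt_Dspace_time hC (u := u) htIoo
    have h0 : famD X (t, u) ((0:ℝ), (1:ℝ)) ≠ 0 := famD_space_ne_zero hC hcurve htIoo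
    have hn := hasDerivAt_norm_curve hy h0
    apply hn.congr_of_eventuallyEq
    filter_upwards [isOpen_Ioo.mem_nhds htIoo] with s hs
    rw [deriv_space_eq hC hs]

lemma hasDerivAt_area_int {t₀ : ℝ} (ht₀ : t₀ ∈ Ioo 0 T) :
    HasDerivAt (fun t => ∫ u in (0:ℝ)..1, ⟪X t u, perp (deriv (X t) u)⟫)
      (∫ u in (0:ℝ)..1,
        (⟪fam X (t₀, u), perpL (famD2 X (t₀, u) ((1:ℝ), (0:ℝ)) ((0:ℝ), (1:ℝ)))⟫ +
          ⟪famD X (t₀, u) ((1:ℝ), (0:ℝ)), perpL (famD X (t₀, u) ((0:ℝ), (1:ℝ)))⟫)) t₀ := by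
  set G' : ℝ × ℝ → ℝ := fun p =>
    ⟪fam X p, perpL (famD2 X p ((1:ℝ), (0:ℝ)) ((0:ℝ), (1:ℝ)))⟫ +
      ⟪famD X p ((1:ℝ), (0:ℝ)), perpL (famD X p ((0:ℝ), (1:ℝ)))⟫ with hG'def
  set ε := min t₀ (T - t₀) / 2 with hεdef
  have hε1 : ε ≤ t₀ / 2 := by
    simp only [hεdef]; have := min_le_left t₀ (T - t₀); linarith
  have hε2 : ε ≤ (T - t₀) / 2 := by
    simp only [hεdef]; have := min_le_right t₀ (T - t₀); linarith
  have hε : 0 < ε := by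
    simp only [hεdef]
    rcases min_cases t₀ (T - t₀) with ⟨h, _⟩ | ⟨h, _⟩ <;> rw [h] <;>
      [linarith [ht₀.1]; linarith [ht₀.2]]
  have hballIoo : ∀ t ∈ Metric.ball t₀ ε, t ∈ Ioo (0:ℝ) T := by
    intro t ht
    rw [Metric.mem_ball, Real.dist_eq, abs_sub_lt_iff] at ht
    exact ⟨by linarith [ht₀.1, ht.1, ht.2], by linarith [ht₀.2, ht.1, ht.2]⟩
  have hKΩ : (Icc (t₀ - ε) (t₀ + ε) ×ˢ Icc (0:ℝ) 1 : Set (ℝ × ℝ)) ⊆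
      Ioo (0:ℝ) T ×ˢ univ := by
    intro p hp
    refine mk_mem_prod ⟨?_, ?_⟩ trivial
    · have := hp.1.1; linarith [ht₀.1]
    · have := hp.1.2; linarith [ht₀.2]
  have hG'cont : ContinuousOn G' (Ioo (0:ℝ) T ×ˢ univ) := by
    apply ContinuousOn.add
    · exact ((hC.mono omega_sub).continuousOn).inner
        (perpL.continuous.comp_continuousOn (continuousOn_famD2_apply hC _ _))
    · exact (continuousOn_famD_apply hC _).inner
        (perpL.continuous.comp_continuousOn (continuousOn_famD_apply hC _))
  obtain ⟨M, hM⟩ := ((isCompact_Icc.prod isCompact_Icc).exists_bound_of_continuousOn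
    (hG'cont.mono hKΩ))
  have hIoc : Set.uIoc (0:ℝ) 1 = Ioc 0 1 := uIoc_of_le (by norm_num)
  refine (intervalIntegral.hasDerivAt_integral_of_dominated_loc_of_deriv_le
    (F := fun t u => ⟪X t u, perp (deriv (X t) u)⟫) (F' := fun t u => G' (t, u))
    (bound := fun _ => M) (Metric.ball_mem_nhds t₀ hε) ?_ ?_ ?_ ?_ ?_ ?_).2
  · filter_upwards [isOpen_Ioo.mem_nhds ht₀] with t ht
    have h1 : Continuous (X t) := (hcurve t (Ioo_subset_Ico_self ht)).1.continuous
    have h2 : Continuous fun u => perp (deriv (X t) u) :=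
      perpL.continuous.comp (contDiff_deriv_curve (hcurve t (Ioo_subset_Ico_self ht)).1).continuous
    exact (h1.inner h2).aestronglyMeasurable
  · have h1 : Continuous (X t₀) := (hcurve t₀ (Ioo_subset_Ico_self ht₀)).1.continuous
    have h2 : Continuous fun u => perp (deriv (X t₀) u) :=
      perpL.continuous.comp
        (contDiff_deriv_curve (hcurve t₀ (Ioo_subset_Ico_self ht₀)).1).continuous
    exact (h1.inner h2).intervalIntegrable 0 1
  · have hcc : Continuous fun u => G' (t₀, u) :=
      hG'cont.comp_continuous (continuous_const.prodMk continuous_id)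
        (fun u => mem_omega ht₀)
    exact hcc.aestronglyMeasurable
  · refine ae_of_all _ (fun u hu t ht => ?_)
    rw [hIoc] at hu
    rw [Metric.mem_ball, Real.dist_eq, abs_sub_lt_iff] at ht
    exact hM (t, u) (mk_mem_prod ⟨by linarith [ht.2], by linarith [ht.1]⟩
      ⟨le_of_lt hu.1, hu.2⟩)
  · exact intervalIntegrable_const
  · refine ae_of_all _ (fun u hu t ht => ?_)
    have htIoo := hballIoo t ht
    have h1 := hasDerivAt_time hC (u := u) htIoo
    have h2 : HasDerivAt (fun s => perpL (famD X (s, u) ((0:ℝ), (1:ℝ))))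
        (perpL (famD2 X (t, u) ((1:ℝ), (0:ℝ)) ((0:ℝ), (1:ℝ)))) t :=
      perpL.hasFDerivAt.comp_hasDerivAt t (hasDerivAt_Dspace_time hC htIoo)
    have h3 := h1.inner ℝ h2
    apply h3.congr_of_eventuallyEq
    filter_upwards [isOpen_Ioo.mem_nhds htIoo] with s hs
    rw [deriv_space_eq hC hs]
    rfl

end FamilyDeriv

section Curve2
variable {Y : ℝ → E2}

lemma continuous_unitNormal (hY : ContDiff ℝ 2 Y) (hd0 : ∀ u, deriv Y u ≠ 0) :
    Continuous (unitNormal Y) := by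
  have hdcont : Continuous (deriv Y) := (contDiff_deriv_curve hY).continuous
  have hρne : ∀ u, ‖deriv Y u‖ ≠ 0 := fun u => norm_ne_zero_iff.mpr (hd0 u)
  exact (hdcont.norm.inv₀ hρne).smul (perpL.continuous.comp hdcont)

lemma continuous_curvature (hY : ContDiff ℝ 2 Y) (hd0 : ∀ u, deriv Y u ≠ 0) :
    Continuous (curvature Y) := by
  have heq : curvature Y = fun u => -(‖deriv Y u‖⁻¹ * ⟪curveG Y u, unitNormal Y u⟫) :=
    funext (curvature_eq_G hY hd0)
  rw [heq]
  have hdcont : Continuous (deriv Y) := (contDiff_deriv_curve hY).continuous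
  have hρne : ∀ u, ‖deriv Y u‖ ≠ 0 := fun u => norm_ne_zero_iff.mpr (hd0 u)
  exact ((hdcont.norm.inv₀ hρne).mul
    ((continuous_curveG hY hd0).inner (continuous_unitNormal hY hd0))).neg

end Curve2

section MainComp

variable {T : ℝ} {X : ℝ → ℝ → E2}
variable (hC : ContDiffOn ℝ 2 (fam X) (Ico 0 T ×ˢ univ))
variable (hcurve : ∀ t ∈ Ico (0:ℝ) T, IsSmoothClosedCurve (X t))
variable (hflow : ∀ t ∈ Ico (0:ℝ) T, ∀ u : ℝ,
      ⟪derivWithin (fun s => X s u) (Ico 0 T) t, unitNormal (X t) u⟫ =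
        -curvature (X t) u +
          (curveLength (X t))⁻¹ * ∫ w in (0:ℝ)..1, curvature (X t) w * ‖deriv (X t) w‖)
include hC hcurve hflow

lemma length_deriv_nonpos {t₀ : ℝ} (ht₀ : t₀ ∈ Ioo 0 T) :
    (∫ u in (0:ℝ)..1, ⟪famD2 X (t₀, u) ((1:ℝ), (0:ℝ)) ((0:ℝ), (1:ℝ)),
        famD X (t₀, u) ((0:ℝ), (1:ℝ))⟫ / ‖famD X (t₀, u) ((0:ℝ), (1:ℝ))‖) ≤ 0 := by
  have htIco := Ioo_subset_Ico_self ht₀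
  obtain ⟨hY2, hYper, hYd0⟩ := hcurve t₀ htIco
  set Y := X t₀ with hYdef
  set c : ℝ := (curveLength Y)⁻¹ * ∫ w in (0:ℝ)..1, curvature Y w * ‖deriv Y w‖ with hcdef
  have hdcont : Continuous (deriv Y) := (contDiff_deriv_curve hY2).continuous
  have hρcont : Continuous (fun u => ‖deriv Y u‖) := hdcont.norm
  have hρne : ∀ u, ‖deriv Y u‖ ≠ 0 := fun u => norm_ne_zero_iff.mpr (hYd0 u)
  have hρinv : Continuous (fun u => ‖deriv Y u‖⁻¹) := hρcont.inv₀ hρne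
  have hTncont : Continuous (fun u => (‖deriv Y u‖⁻¹ • deriv Y u : E2)) := hρinv.smul hdcont
  have hGcont := continuous_curveG hY2 hYd0
  have hκcont : Continuous (curvature Y) := continuous_curvature hY2 hYd0
  set V : ℝ → E2 := fun u => famD X (t₀, u) ((1:ℝ), (0:ℝ)) with hVdef
  set W : ℝ → E2 := fun u => famD2 X (t₀, u) ((1:ℝ), (0:ℝ)) ((0:ℝ), (1:ℝ)) with hWdef
  have hVderiv : ∀ u, HasDerivAt V (W u) u := fun u => hasDerivAt_Dtime_space hC ht₀
  have hVcont : Continuous V := (continuousOn_famD_apply hC _).comp_continuous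
      (continuous_const.prodMk continuous_id) (fun u => mem_omega ht₀)
  have hWcont : Continuous W := (continuousOn_famD2_apply hC _ _).comp_continuous
      (continuous_const.prodMk continuous_id) (fun u => mem_omega ht₀)
  have hdfam : ∀ u, deriv Y u = famD X (t₀, u) ((0:ℝ), (1:ℝ)) := fun u => deriv_space_eq hC ht₀
  have hVnn : ∀ u, ⟪V u, unitNormal Y u⟫ = -curvature Y u + c := by
    intro u
    have h1 := hflow t₀ htIco u
    have h2 : derivWithin (fun s => X s u) (Ico 0 T) t₀ = V u := by
      rw [derivWithin_of_mem_nhds (Ico_mem_nhds ht₀.1 ht₀.2)]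
      exact (hasDerivAt_time hC ht₀).deriv
    rw [h2] at h1
    exact h1
  have hdper : ∀ u, deriv Y (u + 1) = deriv Y u := by
    intro u
    have h3 : deriv (fun v => Y (v + 1)) u = deriv Y (u + 1) := deriv_comp_add_const Y 1 u
    rw [← h3]
    congr 1
    funext v
    exact hYper v
  have hVper : V 1 = V 0 := by
    have h4 := famD_periodic hC (fun t ht u => (hcurve t ht).2.1 u) (u := 0) ht₀
    simp only [hVdef]
    rw [show (1:ℝ) = 0 + 1 by norm_num, h4]
  have hφ : ∀ u, HasDerivAt (fun v => ⟪V v, (‖deriv Y v‖⁻¹ • deriv Y v : E2)⟫)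
      (⟪V u, curveG Y u⟫ + ⟪W u, (‖deriv Y u‖⁻¹ • deriv Y u : E2)⟫) u :=
    fun u => (hVderiv u).inner ℝ (hasDerivAt_tangent hY2 hYd0 u)
  have hsum0 : ∫ u in (0:ℝ)..1,
      (⟪V u, curveG Y u⟫ + ⟪W u, (‖deriv Y u‖⁻¹ • deriv Y u : E2)⟫) = 0 := by
    apply integral_periodic_deriv_zero hφ
      ((hVcont.inner hGcont).add (hWcont.inner hTncont))
    have h1 : deriv Y 1 = deriv Y 0 := by
      rw [show (1:ℝ) = 0 + 1 by norm_num, hdper 0]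
    rw [hVper, h1]
  have hi1 : IntervalIntegrable (fun u => ⟪V u, curveG Y u⟫) volume 0 1 :=
    (hVcont.inner hGcont).intervalIntegrable 0 1
  have hi2 : IntervalIntegrable
      (fun u => ⟪W u, (‖deriv Y u‖⁻¹ • deriv Y u : E2)⟫) volume 0 1 :=
    (hWcont.inner hTncont).intervalIntegrable 0 1
  have hib : (∫ u in (0:ℝ)..1, ⟪W u, (‖deriv Y u‖⁻¹ • deriv Y u : E2)⟫)
      = - ∫ u in (0:ℝ)..1, ⟪V u, curveG Y u⟫ := by
    have h5 := intervalIntegral.integral_add hi1 hi2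
    rw [hsum0] at h5
    linarith [h5]
  have hgoal_eq : (∫ u in (0:ℝ)..1, ⟪famD2 X (t₀, u) ((1:ℝ), (0:ℝ)) ((0:ℝ), (1:ℝ)),
        famD X (t₀, u) ((0:ℝ), (1:ℝ))⟫ / ‖famD X (t₀, u) ((0:ℝ), (1:ℝ))‖)
      = ∫ u in (0:ℝ)..1, ⟪W u, (‖deriv Y u‖⁻¹ • deriv Y u : E2)⟫ := by
    apply intervalIntegral.integral_congr
    intro u _
    simp only [hWdef]
    rw [real_inner_smul_right, ← hdfam u, div_eq_inv_mul]
  rw [hgoal_eq, hib, neg_nonpos]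
  have hVG : ∀ u, ⟪V u, curveG Y u⟫ =
      curvature Y u * ‖deriv Y u‖ * (curvature Y u - c) := by
    intro u
    rw [curveG_eq hY2 hYd0 u, real_inner_smul_right, hVnn u]
    ring
  have h6 : (∫ u in (0:ℝ)..1, ⟪V u, curveG Y u⟫)
      = ∫ u in (0:ℝ)..1, curvature Y u * ‖deriv Y u‖ * (curvature Y u - c) :=
    intervalIntegral.integral_congr (fun u _ => hVG u)
  rw [h6]
  apply key_CS hκcont hρcont (fun u => norm_nonneg _) c
  have hLpos : 0 < curveLength Y :=
    intervalIntegral.intervalIntegral_pos_of_pos_on (hρcont.intervalIntegrable 0 1)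
      (fun u _ => norm_pos_iff.mpr (hYd0 u)) (by norm_num)
  have hLdef : curveLength Y = ∫ u in (0:ℝ)..1, ‖deriv Y u‖ := rfl
  rw [hcdef, ← hLdef]
  field_simp

lemma area_deriv_zero {t₀ : ℝ} (ht₀ : t₀ ∈ Ioo 0 T) :
    (∫ u in (0:ℝ)..1,
        (⟪fam X (t₀, u), perpL (famD2 X (t₀, u) ((1:ℝ), (0:ℝ)) ((0:ℝ), (1:ℝ)))⟫ +
          ⟪famD X (t₀, u) ((1:ℝ), (0:ℝ)), perpL (famD X (t₀, u) ((0:ℝ), (1:ℝ)))⟫)) = 0 := by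
  have htIco := Ioo_subset_Ico_self ht₀
  obtain ⟨hY2, hYper, hYd0⟩ := hcurve t₀ htIco
  set Y := X t₀ with hYdef
  set c : ℝ := (curveLength Y)⁻¹ * ∫ w in (0:ℝ)..1, curvature Y w * ‖deriv Y w‖ with hcdef
  have hdcont : Continuous (deriv Y) := (contDiff_deriv_curve hY2).continuous
  have hρcont : Continuous (fun u => ‖deriv Y u‖) := hdcont.norm
  have hρne : ∀ u, ‖deriv Y u‖ ≠ 0 := fun u => norm_ne_zero_iff.mpr (hYd0 u)
  have hκcont : Continuous (curvature Y) := continuous_curvature hY2 hYd0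
  have hYcont : Continuous Y := hY2.continuous
  set V : ℝ → E2 := fun u => famD X (t₀, u) ((1:ℝ), (0:ℝ)) with hVdef
  set W : ℝ → E2 := fun u => famD2 X (t₀, u) ((1:ℝ), (0:ℝ)) ((0:ℝ), (1:ℝ)) with hWdef
  have hVderiv : ∀ u, HasDerivAt V (W u) u := fun u => hasDerivAt_Dtime_space hC ht₀
  have hVcont : Continuous V := (continuousOn_famD_apply hC _).comp_continuous
      (continuous_const.prodMk continuous_id) (fun u => mem_omega ht₀)
  have hWcont : Continuous W := (continuousOn_famD2_apply hC _ _).comp_continuous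
      (continuous_const.prodMk continuous_id) (fun u => mem_omega ht₀)
  have hdfam : ∀ u, deriv Y u = famD X (t₀, u) ((0:ℝ), (1:ℝ)) := fun u => deriv_space_eq hC ht₀
  have hVnn : ∀ u, ⟪V u, unitNormal Y u⟫ = -curvature Y u + c := by
    intro u
    have h1 := hflow t₀ htIco u
    have h2 : derivWithin (fun s => X s u) (Ico 0 T) t₀ = V u := by
      rw [derivWithin_of_mem_nhds (Ico_mem_nhds ht₀.1 ht₀.2)]
      exact (hasDerivAt_time hC ht₀).deriv
    rw [h2] at h1
    exact h1
  have hVper : V 1 = V 0 := by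
    have h4 := famD_periodic hC (fun t ht u => (hcurve t ht).2.1 u) (u := 0) ht₀
    simp only [hVdef]
    rw [show (1:ℝ) = 0 + 1 by norm_num, h4]
  have hYd : ∀ u, HasDerivAt Y (deriv Y u) u :=
    fun u => ((hY2.differentiable (by norm_num)) u).hasDerivAt
  have hψ : ∀ u, HasDerivAt (fun v => ⟪Y v, perpL (V v)⟫)
      (⟪Y u, perpL (W u)⟫ + ⟪deriv Y u, perpL (V u)⟫) u :=
    fun u => (hYd u).inner ℝ (perpL.hasFDerivAt.comp_hasDerivAt u (hVderiv u))
  have hpVcont : Continuous (fun u => perpL (V u)) := perpL.continuous.comp hVcont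
  have hpWcont : Continuous (fun u => perpL (W u)) := perpL.continuous.comp hWcont
  have hpdcont : Continuous (fun u => perpL (deriv Y u)) := perpL.continuous.comp hdcont
  have hsum0 : ∫ u in (0:ℝ)..1,
      (⟪Y u, perpL (W u)⟫ + ⟪deriv Y u, perpL (V u)⟫) = 0 := by
    apply integral_periodic_deriv_zero hψ
      ((hYcont.inner hpWcont).add (hdcont.inner hpVcont))
    have h1 : Y 1 = Y 0 := by rw [show (1:ℝ) = 0 + 1 by norm_num, hYper 0]
    rw [hVper, h1]
  have hint1 : IntervalIntegrable
      (fun u => ⟪Y u, perpL (W u)⟫ + ⟪deriv Y u, perpL (V u)⟫) volume 0 1 :=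
    ((hYcont.inner hpWcont).add (hdcont.inner hpVcont)).intervalIntegrable 0 1
  have hint2 : IntervalIntegrable
      (fun u => (2:ℝ) * ⟪V u, perpL (deriv Y u)⟫) volume 0 1 :=
    (continuous_const.mul (hVcont.inner hpdcont)).intervalIntegrable 0 1
  have hswap : ∀ u, ⟪deriv Y u, perpL (V u)⟫ = -⟪V u, perpL (deriv Y u)⟫ := by
    intro u
    show ⟪deriv Y u, perp (V u)⟫ = -⟪V u, perp (deriv Y u)⟫
    rw [real_inner_comm, inner_perp_swap]
  have hsplit : (∫ u in (0:ℝ)..1,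
        (⟪fam X (t₀, u), perpL (famD2 X (t₀, u) ((1:ℝ), (0:ℝ)) ((0:ℝ), (1:ℝ)))⟫ +
          ⟪famD X (t₀, u) ((1:ℝ), (0:ℝ)), perpL (famD X (t₀, u) ((0:ℝ), (1:ℝ)))⟫))
      = (∫ u in (0:ℝ)..1, (⟪Y u, perpL (W u)⟫ + ⟪deriv Y u, perpL (V u)⟫))
        + ∫ u in (0:ℝ)..1, (2:ℝ) * ⟪V u, perpL (deriv Y u)⟫ := by
    rw [← intervalIntegral.integral_add hint1 hint2]
    apply intervalIntegral.integral_congr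
    intro u _
    simp only [hWdef, hVdef]
    rw [show fam X (t₀, u) = Y u from rfl, ← hdfam u]
    have swap2 : ⟪deriv Y u, perpL (famD X (t₀, u) ((1:ℝ), (0:ℝ)))⟫ =
        -⟪famD X (t₀, u) ((1:ℝ), (0:ℝ)), perpL (deriv Y u)⟫ := by
      show ⟪deriv Y u, perp (famD X (t₀, u) ((1:ℝ), (0:ℝ)))⟫ =
        -⟪famD X (t₀, u) ((1:ℝ), (0:ℝ)), perp (deriv Y u)⟫
      rw [real_inner_comm, inner_perp_swap]
    rw [swap2]
    ring
  rw [hsplit, hsum0, zero_add, intervalIntegral.integral_const_mul]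
  have hLpos : 0 < curveLength Y :=
    intervalIntegral.intervalIntegral_pos_of_pos_on (hρcont.intervalIntegrable 0 1)
      (fun u _ => norm_pos_iff.mpr (hYd0 u)) (by norm_num)
  have hVperp : ∀ u, ⟪V u, perpL (deriv Y u)⟫ =
      c * ‖deriv Y u‖ - curvature Y u * ‖deriv Y u‖ := by
    intro u
    have hpd : perpL (deriv Y u) = ‖deriv Y u‖ • unitNormal Y u := by
      show perp (deriv Y u) = ‖deriv Y u‖ • unitNormal Y u
      rw [unitNormal, smul_smul, mul_inv_cancel₀ (hρne u), one_smul]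
    rw [hpd, real_inner_smul_right, hVnn u]
    ring
  have h8 : (∫ u in (0:ℝ)..1, ⟪V u, perpL (deriv Y u)⟫)
      = ∫ u in (0:ℝ)..1, (c * ‖deriv Y u‖ - curvature Y u * ‖deriv Y u‖) :=
    intervalIntegral.integral_congr (fun u _ => hVperp u)
  rw [h8, intervalIntegral.integral_sub
    (show IntervalIntegrable (fun u => c * ‖deriv Y u‖) volume 0 1 from
      (continuous_const.mul hρcont).intervalIntegrable 0 1)
    (show IntervalIntegrable (fun u => curvature Y u * ‖deriv Y u‖) volume 0 1 from
      (hκcont.mul hρcont).intervalIntegrable 0 1),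
    intervalIntegral.integral_const_mul]
  have hLdef : curveLength Y = ∫ u in (0:ℝ)..1, ‖deriv Y u‖ := rfl
  have hcl : c * (∫ u in (0:ℝ)..1, ‖deriv Y u‖)
      = ∫ u in (0:ℝ)..1, curvature Y u * ‖deriv Y u‖ := by
    rw [hcdef, ← hLdef]
    field_simp
  rw [hcl, sub_self, mul_zero]

end MainComp

/-- Under the area-preserving mean-curvature flow with positive initial enclosed area,
the isoperimetric ratio `L²/(4πA)` is non-increasing in time. -/
theorem isoperimetric_ratio_nonincreasing (T : ℝ) (X : ℝ → ℝ → E2)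
    (hX : IsSmoothClosedFamily T X)
    (hflow : ∀ t ∈ Ico (0:ℝ) T, ∀ u : ℝ,
      ⟪derivWithin (fun s => X s u) (Ico 0 T) t, unitNormal (X t) u⟫ =
        -curvature (X t) u +
          (curveLength (X t))⁻¹ * ∫ w in (0:ℝ)..1, curvature (X t) w * ‖deriv (X t) w‖)
    (hA0 : 0 < enclosedArea (X 0)) :
    AntitoneOn (fun t => (curveLength (X t))^2 / (4 * π * enclosedArea (X t))) (Ico 0 T) := by
  intro a ha b hb hab
  have hT0 : (0:ℝ) < T := lt_of_le_of_lt ha.1 ha.2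
  obtain ⟨hC, hcurve⟩ := hX
  have hC' : ContDiffOn ℝ 2 (fam X) (Ico 0 T ×ˢ univ) := hC
  have hLcont : ContinuousOn (fun t => curveLength (X t)) (Ico 0 T) :=
    continuousOn_length hC' hcurve
  have hAcont : ContinuousOn (fun t => enclosedArea (X t)) (Ico 0 T) :=
    continuousOn_const.mul (continuousOn_area_int hC' hcurve)
  have hLd : ∀ t ∈ interior (Ico (0:ℝ) T),
      DifferentiableAt ℝ (fun t => curveLength (X t)) t ∧
        deriv (fun t => curveLength (X t)) t ≤ 0 := by
    intro t ht
    rw [interior_Ico] at ht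
    have h2 : HasDerivAt (fun t => curveLength (X t))
        (∫ u in (0:ℝ)..1, ⟪famD2 X (t, u) ((1:ℝ), (0:ℝ)) ((0:ℝ), (1:ℝ)),
          famD X (t, u) ((0:ℝ), (1:ℝ))⟫ / ‖famD X (t, u) ((0:ℝ), (1:ℝ))‖) t :=
      hasDerivAt_length hC' hcurve ht
    refine ⟨h2.differentiableAt, ?_⟩
    rw [h2.deriv]
    exact length_deriv_nonpos hC' hcurve hflow ht
  have hLanti : AntitoneOn (fun t => curveLength (X t)) (Ico 0 T) :=
    antitoneOn_of_deriv_nonpos (convex_Ico 0 T) hLcont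
      (fun t ht => (hLd t ht).1.differentiableWithinAt) (fun t ht => (hLd t ht).2)
  have hAderiv : ∀ t ∈ interior (Ico (0:ℝ) T),
      HasDerivAt (fun t => enclosedArea (X t)) 0 t := by
    intro t ht
    rw [interior_Ico] at ht
    have h := (hasDerivAt_area_int hC' hcurve ht).const_mul ((1:ℝ)/2)
    rw [area_deriv_zero hC' hcurve hflow ht, mul_zero] at h
    exact h
  have hAmono : MonotoneOn (fun t => enclosedArea (X t)) (Ico 0 T) :=
    monotoneOn_of_deriv_nonneg (convex_Ico 0 T) hAcont
      (fun t ht => (hAderiv t ht).differentiableAt.differentiableWithinAt)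
      (fun t ht => le_of_eq (hAderiv t ht).deriv.symm)
  have hAanti : AntitoneOn (fun t => enclosedArea (X t)) (Ico 0 T) :=
    antitoneOn_of_deriv_nonpos (convex_Ico 0 T) hAcont
      (fun t ht => (hAderiv t ht).differentiableAt.differentiableWithinAt)
      (fun t ht => le_of_eq (hAderiv t ht).deriv)
  have h0mem : (0:ℝ) ∈ Ico (0:ℝ) T := ⟨le_refl 0, hT0⟩
  have hAeq : ∀ t ∈ Ico (0:ℝ) T, enclosedArea (X t) = enclosedArea (X 0) := fun t ht =>
    le_antisymm (hAanti h0mem ht ht.1) (hAmono h0mem ht ht.1)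
  have hLnonneg : ∀ t, 0 ≤ curveLength (X t) := fun t =>
    intervalIntegral.integral_nonneg (by norm_num) (fun u _ => norm_nonneg _)
  have hden : 0 < 4 * π * enclosedArea (X 0) := by
    have hπ := Real.pi_pos
    nlinarith [hA0]
  show curveLength (X b) ^ 2 / (4 * π * enclosedArea (X b)) ≤
    curveLength (X a) ^ 2 / (4 * π * enclosedArea (X a))
  rw [hAeq a ha, hAeq b hb]
  have hsq : curveLength (X b) ^ 2 ≤ curveLength (X a) ^ 2 :=
    pow_le_pow_left₀ (hLnonneg b) (hLanti ha hb hab) 2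
  exact div_le_div_of_nonneg_right hsq hden.le
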